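/- Let E : ℕ → ℝ be a sequence of real numbers and for t ∈ ℝ let U_t denote the time-evolution map on ℓ²(ℕ, ℂ) given by (U_t c)ₙ = exp(-i·Eₙ·t)·cₙ. Let X ⊆ ℓ²(ℕ, ℂ) be a compact set. Then for every t > 0 and every ε > 0 there exists a single s ≥ 0 such that ‖U_{-t} c - U_s c‖ < ε for all c ∈ X simultaneously. -/

import Mathlib

open scoped ENNReal

/-- The time-evolution map `U_t` on `ℓ²(ℕ, ℂ)`: `(U_t c)ₙ = exp(-i·Eₙ·t)·cₙ`. -/
noncomputable def timeEvol (E : ℕ → ℝ) (t : ℝ) (c : lp (fun _ : ℕ => ℂ) 2) :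
    lp (fun _ : ℕ => ℂ) 2 :=
  ⟨fun n => Complex.exp ((-(E n * t) : ℝ) * Complex.I) * (c : ∀ _ : ℕ, ℂ) n, by
    apply memℓp_gen
    have hs : Summable fun n : ℕ => ‖(c : ∀ _ : ℕ, ℂ) n‖ ^ (2 : ℝ≥0∞).toReal :=
      (lp.memℓp c).summable (by norm_num)
    refine hs.congr fun n => ?_
    simp [norm_mul, Complex.norm_exp]⟩

lemma timeEvol_apply (E : ℕ → ℝ) (t : ℝ) (c : lp (fun _ : ℕ => ℂ) 2) (n : ℕ) :
    (timeEvol E t c : ∀ _ : ℕ, ℂ) n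
      = Complex.exp ((-(E n * t) : ℝ) * Complex.I) * (c : ∀ _ : ℕ, ℂ) n := rfl

lemma timeEvol_sub (E : ℕ → ℝ) (t : ℝ) (c d : lp (fun _ : ℕ => ℂ) 2) :
    timeEvol E t (c - d) = timeEvol E t c - timeEvol E t d := by
  apply lp.ext
  funext n
  simp [timeEvol_apply, lp.coeFn_sub, Pi.sub_apply, mul_sub]

lemma norm_sq_eq_tsum (c : lp (fun _ : ℕ => ℂ) 2) :
    ‖c‖ ^ 2 = ∑' n, ‖(c : ∀ _ : ℕ, ℂ) n‖ ^ 2 := by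
  have h2 : (0 : ℝ) < (2 : ℝ≥0∞).toReal := by norm_num
  have := lp.norm_rpow_eq_tsum h2 c
  have ht : (2 : ℝ≥0∞).toReal = ((2 : ℕ) : ℝ) := by norm_num
  rw [ht] at this
  simpa [Real.rpow_natCast] using this

lemma summable_norm_sq (c : lp (fun _ : ℕ => ℂ) 2) :
    Summable fun n => ‖(c : ∀ _ : ℕ, ℂ) n‖ ^ 2 := by
  have hs : Summable fun n : ℕ => ‖(c : ∀ _ : ℕ, ℂ) n‖ ^ (2 : ℝ≥0∞).toReal :=
    (lp.memℓp c).summable (by norm_num)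
  refine hs.congr fun n => ?_
  have ht : (2 : ℝ≥0∞).toReal = ((2 : ℕ) : ℝ) := by norm_num
  rw [ht, Real.rpow_natCast]

lemma norm_timeEvol (E : ℕ → ℝ) (t : ℝ) (c : lp (fun _ : ℕ => ℂ) 2) :
    ‖timeEvol E t c‖ = ‖c‖ := by
  have h1 : ‖timeEvol E t c‖ ^ 2 = ‖c‖ ^ 2 := by
    rw [norm_sq_eq_tsum, norm_sq_eq_tsum]
    congr 1
    funext n
    simp [timeEvol_apply, norm_mul, Complex.norm_exp]
  have := congrArg Real.sqrt h1
  rwa [Real.sqrt_sq (norm_nonneg _), Real.sqrt_sq (norm_nonneg _)] at this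

/-- Recurrence: for any finite collection of frequencies there are arbitrarily
large times at which the evolution is close to the identity. -/
lemma recurrence (E : ℕ → ℝ) (N : ℕ) (t δ : ℝ) (ht : 0 < t) (hδ : 0 < δ) :
    ∃ r : ℝ, t ≤ r ∧ ∀ n < N, ‖Complex.exp ((-(E n * r) : ℝ) * Complex.I) - 1‖ < δ := by
  set φ : ℕ → (Fin N → ℂ) := fun k n => Complex.exp ((-(E n * (k * t)) : ℝ) * Complex.I)
  have hφ : ∀ k, φ k ∈ Metric.closedBall (0 : Fin N → ℂ) 1 := by
    intro k
    rw [Metric.mem_closedBall, dist_zero_right]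
    refine pi_norm_le_iff_of_nonneg zero_le_one |>.2 fun n => ?_
    simp [φ, Complex.norm_exp]
  obtain ⟨L, _, g, hg, hlim⟩ :=
    (isCompact_closedBall (0 : Fin N → ℂ) 1).tendsto_subseq hφ
  have hcauchy := hlim.cauchySeq
  rw [Metric.cauchySeq_iff] at hcauchy
  obtain ⟨K, hK⟩ := hcauchy δ hδ
  have hlt : g K < g (K + 1) := hg (Nat.lt_succ_self K)
  set k := g K
  set l := g (K + 1)
  set m := l - k with hm
  have hm1 : 1 ≤ m := by omega
  have hlk : (l : ℝ) = (k : ℝ) + (m : ℝ) := by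
    have : l = k + m := by omega
    rw [this]; push_cast; ring
  refine ⟨m * t, ?_, ?_⟩
  · calc t = 1 * t := (one_mul t).symm
    _ ≤ m * t := by
        apply mul_le_mul_of_nonneg_right _ ht.le
        exact_mod_cast hm1
  · intro n hn
    have hd : dist (φ l) (φ k) < δ := hK (K + 1) (by omega) K le_rfl
    have hdn : dist (φ l ⟨n, hn⟩) (φ k ⟨n, hn⟩) < δ :=
      lt_of_le_of_lt (dist_le_pi_dist (φ l) (φ k) ⟨n, hn⟩) hd
    rw [dist_eq_norm] at hdn
    have key : φ l ⟨n, hn⟩ - φ k ⟨n, hn⟩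
        = Complex.exp ((-(E n * (k * t)) : ℝ) * Complex.I)
          * (Complex.exp ((-(E n * (m * t)) : ℝ) * Complex.I) - 1) := by
      simp only [φ]
      rw [mul_sub, mul_one, ← Complex.exp_add]
      congr 2
      have hlkC : (l : ℂ) = (k : ℂ) + (m : ℂ) := by
        exact_mod_cast congrArg (Nat.cast : ℕ → ℂ) (show l = k + m by omega)
      push_cast
      rw [hlkC]
      ring
    rw [key, norm_mul] at hdn
    have habs : ‖Complex.exp ((-(E n * (k * t)) : ℝ) * Complex.I)‖ = 1 := by
      simp [Complex.norm_exp]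
    rw [habs, one_mul] at hdn
    exact hdn

set_option maxHeartbeats 1000000 in
/-- Tail estimate for the difference of two evolutions of the same state. -/
lemma evol_diff_sq_le (E : ℕ → ℝ) (c : lp (fun _ : ℕ => ℂ) 2) (r₁ r₂ : ℝ) (N : ℕ)
    (δ : ℝ) (hδ : 0 ≤ δ)
    (h : ∀ n < N, ‖Complex.exp ((-(E n * r₁) : ℝ) * Complex.I)
        - Complex.exp ((-(E n * r₂) : ℝ) * Complex.I)‖ ≤ δ) :
    ‖timeEvol E r₁ c - timeEvol E r₂ c‖ ^ 2
      ≤ δ ^ 2 * ‖c‖ ^ 2 + 4 * ∑' k, ‖(c : ∀ _ : ℕ, ℂ) (k + N)‖ ^ 2 := by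
  set d := timeEvol E r₁ c - timeEvol E r₂ c
  have hdapp : ∀ n, (d : ∀ _ : ℕ, ℂ) n
      = (Complex.exp ((-(E n * r₁) : ℝ) * Complex.I)
          - Complex.exp ((-(E n * r₂) : ℝ) * Complex.I)) * (c : ∀ _ : ℕ, ℂ) n := by
    intro n
    simp [d, lp.coeFn_sub, Pi.sub_apply, timeEvol_apply, sub_mul]
  have hsum : Summable fun n => ‖(d : ∀ _ : ℕ, ℂ) n‖ ^ 2 := summable_norm_sq d
  have hsumc : Summable fun n => ‖(c : ∀ _ : ℕ, ℂ) n‖ ^ 2 := summable_norm_sq c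
  rw [norm_sq_eq_tsum d, ← Summable.sum_add_tsum_nat_add N hsum]
  have hbd : ∀ n, ‖(d : ∀ _ : ℕ, ℂ) n‖ ^ 2
      ≤ ‖Complex.exp ((-(E n * r₁) : ℝ) * Complex.I)
          - Complex.exp ((-(E n * r₂) : ℝ) * Complex.I)‖ ^ 2 * ‖(c : ∀ _ : ℕ, ℂ) n‖ ^ 2 := by
    intro n
    rw [hdapp n, norm_mul, mul_pow]
  have h1 : ∑ n ∈ Finset.range N, ‖(d : ∀ _ : ℕ, ℂ) n‖ ^ 2 ≤ δ ^ 2 * ‖c‖ ^ 2 := by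
    calc ∑ n ∈ Finset.range N, ‖(d : ∀ _ : ℕ, ℂ) n‖ ^ 2
        ≤ ∑ n ∈ Finset.range N, δ ^ 2 * ‖(c : ∀ _ : ℕ, ℂ) n‖ ^ 2 := by
          refine Finset.sum_le_sum fun n hn => ?_
          refine (hbd n).trans ?_
          apply mul_le_mul_of_nonneg_right _ (by positivity)
          exact pow_le_pow_left₀ (norm_nonneg _) (h n (Finset.mem_range.1 hn)) 2
      _ = δ ^ 2 * ∑ n ∈ Finset.range N, ‖(c : ∀ _ : ℕ, ℂ) n‖ ^ 2 := by
          rw [Finset.mul_sum]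
      _ ≤ δ ^ 2 * ‖c‖ ^ 2 := by
          apply mul_le_mul_of_nonneg_left _ (by positivity)
          rw [norm_sq_eq_tsum c]
          exact Summable.sum_le_tsum _ (fun i _ => by positivity) hsumc
  have h2 : ∑' k, ‖(d : ∀ _ : ℕ, ℂ) (k + N)‖ ^ 2
      ≤ ∑' k, 4 * ‖(c : ∀ _ : ℕ, ℂ) (k + N)‖ ^ 2 := by
    refine Summable.tsum_le_tsum (fun k => ?_) ((summable_nat_add_iff N).2 hsum)
      (((summable_nat_add_iff N).2 hsumc).mul_left 4)
    refine (hbd (k + N)).trans ?_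
    apply mul_le_mul_of_nonneg_right _ (by positivity)
    have h2' : ‖Complex.exp ((-(E (k + N) * r₁) : ℝ) * Complex.I)
        - Complex.exp ((-(E (k + N) * r₂) : ℝ) * Complex.I)‖ ≤ 2 := by
      refine (norm_sub_le _ _).trans ?_
      have e1 : ‖Complex.exp ((-(E (k + N) * r₁) : ℝ) * Complex.I)‖ = 1 := by
        simp [Complex.norm_exp]
      have e2 : ‖Complex.exp ((-(E (k + N) * r₂) : ℝ) * Complex.I)‖ = 1 := by
        simp [Complex.norm_exp]
      rw [e1, e2]; norm_num
    nlinarith [norm_nonneg (Complex.exp ((-(E (k + N) * r₁) : ℝ) * Complex.I)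
        - Complex.exp ((-(E (k + N) * r₂) : ℝ) * Complex.I))]
  rw [tsum_mul_left] at h2
  linarith

lemma tail_mono (c : lp (fun _ : ℕ => ℂ) 2) {N M : ℕ} (h : N ≤ M) :
    ∑' k, ‖(c : ∀ _ : ℕ, ℂ) (k + M)‖ ^ 2 ≤ ∑' k, ‖(c : ∀ _ : ℕ, ℂ) (k + N)‖ ^ 2 := by
  have hs := summable_norm_sq c
  have e1 := Summable.sum_add_tsum_nat_add (f := fun n => ‖(c : ∀ _ : ℕ, ℂ) n‖ ^ 2) N hs
  have e2 := Summable.sum_add_tsum_nat_add (f := fun n => ‖(c : ∀ _ : ℕ, ℂ) n‖ ^ 2) M hs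
  have hhead : ∑ n ∈ Finset.range N, ‖(c : ∀ _ : ℕ, ℂ) n‖ ^ 2
      ≤ ∑ n ∈ Finset.range M, ‖(c : ∀ _ : ℕ, ℂ) n‖ ^ 2 :=
    Finset.sum_le_sum_of_subset_of_nonneg (Finset.range_subset_range.2 h)
      (fun i _ _ => by positivity)
  linarith

/-- backward evolution approximated by forward evolution, uniformly
over a compact set of states. -/
theorem backward_approx_forward_compact (E : ℕ → ℝ)
    (X : Set (lp (fun _ : ℕ => ℂ) 2)) (hX : IsCompact X) (t ε : ℝ)
    (ht : 0 < t) (hε : 0 < ε) :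
    ∃ s : ℝ, 0 ≤ s ∧ ∀ c ∈ X, ‖timeEvol E (-t) c - timeEvol E s c‖ < ε := by
  -- finite ε/4-net
  have hcover : X ⊆ ⋃ f ∈ X, Metric.ball f (ε / 4) := fun c hc =>
    Set.mem_biUnion hc (Metric.mem_ball_self (by positivity))
  obtain ⟨F, hFX, hFfin, hFcover⟩ :=
    hX.elim_finite_subcover_image (fun f _ => Metric.isOpen_ball) hcover
  -- bound on norms of net points
  obtain ⟨M, hM⟩ : ∃ M, ∀ f ∈ F, ‖f‖ ≤ M := by
    obtain ⟨M, hM⟩ := (hFfin.image fun f => ‖f‖).bddAbove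
    exact ⟨M, fun f hf => hM (Set.mem_image_of_mem _ hf)⟩
  set δ := ε / (8 * (|M| + 1)) with hδdef
  have hδpos : 0 < δ := by positivity
  have hδM : δ * (|M| + 1) = ε / 8 := by
    rw [hδdef]; field_simp
  -- choose tails
  have htail : ∀ f : lp (fun _ : ℕ => ℂ) 2,
      ∃ N, ∑' k, ‖(f : ∀ _ : ℕ, ℂ) (k + N)‖ ^ 2 < (ε / 8) ^ 2 := fun f =>
    ((tendsto_sum_nat_add fun n => ‖(f : ∀ _ : ℕ, ℂ) n‖ ^ 2).eventually
      (gt_mem_nhds (by positivity : (0 : ℝ) < (ε / 8) ^ 2))).exists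
  choose Nf hNf using htail
  set N := hFfin.toFinset.sup Nf with hNdef
  -- recurrence
  obtain ⟨r, hrt, hrn⟩ := recurrence E N t δ ht hδpos
  refine ⟨r - t, by linarith, ?_⟩
  set s := r - t with hsdef
  -- coordinate condition
  have hco : ∀ n < N, ‖Complex.exp ((-(E n * (-t)) : ℝ) * Complex.I)
      - Complex.exp ((-(E n * s) : ℝ) * Complex.I)‖ ≤ δ := by
    intro n hn
    have key : Complex.exp ((-(E n * (-t)) : ℝ) * Complex.I)
        - Complex.exp ((-(E n * s) : ℝ) * Complex.I)
        = Complex.exp ((-(E n * (-t)) : ℝ) * Complex.I)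
          * (1 - Complex.exp ((-(E n * r) : ℝ) * Complex.I)) := by
      have hmul : Complex.exp ((-(E n * (-t)) : ℝ) * Complex.I)
          * Complex.exp ((-(E n * r) : ℝ) * Complex.I)
          = Complex.exp ((-(E n * s) : ℝ) * Complex.I) := by
        rw [← Complex.exp_add]
        congr 1
        have : s = r - t := hsdef
        push_cast [this]
        ring
      rw [mul_one_sub, hmul]
    rw [key, norm_mul]
    have habs : ‖Complex.exp ((-(E n * (-t)) : ℝ) * Complex.I)‖ = 1 := by
      simp [Complex.norm_exp]
    rw [habs, one_mul, norm_sub_rev]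
    exact (hrn n hn).le
  -- estimate on net points
  have hest : ∀ f ∈ F, ‖timeEvol E (-t) f - timeEvol E s f‖ < ε / 2 := by
    intro f hf
    have hNle : Nf f ≤ N := Finset.le_sup (hFfin.mem_toFinset.2 hf)
    have h1 := evol_diff_sq_le E f (-t) s (Nf f) δ hδpos.le
      (fun n hn => hco n (lt_of_lt_of_le hn hNle))
    have e3 : δ ^ 2 * ‖f‖ ^ 2 ≤ (ε / 8) ^ 2 := by
      have hfM : ‖f‖ ≤ |M| + 1 := (hM f hf).trans (by linarith [le_abs_self M])
      calc δ ^ 2 * ‖f‖ ^ 2 = (δ * ‖f‖) ^ 2 := by ring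
        _ ≤ (δ * (|M| + 1)) ^ 2 := by
            apply pow_le_pow_left₀ (by positivity)
            exact mul_le_mul_of_nonneg_left hfM hδpos.le
        _ = (ε / 8) ^ 2 := by rw [hδM]
    have hsq : ‖timeEvol E (-t) f - timeEvol E s f‖ ^ 2 < (ε / 2) ^ 2 := by
      have := hNf f
      nlinarith [mul_pos hε hε]
    have := lt_of_pow_lt_pow_left₀ 2 (by positivity : (0 : ℝ) ≤ ε / 2) hsq
    exact this
  -- conclude for all of X
  intro c hc
  obtain ⟨f, hfF, hcf⟩ := Set.mem_iUnion₂.1 (hFcover hc)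
  have hcf' : ‖c - f‖ < ε / 4 := by
    rw [← dist_eq_norm]; exact Metric.mem_ball.1 hcf
  have hrw : timeEvol E (-t) c - timeEvol E s c
      = (timeEvol E (-t) f - timeEvol E s f)
        + (timeEvol E (-t) (c - f) - timeEvol E s (c - f)) := by
    rw [timeEvol_sub, timeEvol_sub]; abel
  calc ‖timeEvol E (-t) c - timeEvol E s c‖
      = ‖(timeEvol E (-t) f - timeEvol E s f)
        + (timeEvol E (-t) (c - f) - timeEvol E s (c - f))‖ := by rw [hrw]
    _ ≤ ‖timeEvol E (-t) f - timeEvol E s f‖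
        + ‖timeEvol E (-t) (c - f) - timeEvol E s (c - f)‖ := norm_add_le _ _
    _ ≤ ‖timeEvol E (-t) f - timeEvol E s f‖
        + (‖timeEvol E (-t) (c - f)‖ + ‖timeEvol E s (c - f)‖) :=
        add_le_add_right (norm_sub_le _ _) _
    _ = ‖timeEvol E (-t) f - timeEvol E s f‖ + 2 * ‖c - f‖ := by
        rw [norm_timeEvol, norm_timeEvol]; ring
    _ < ε / 2 + 2 * (ε / 4) := by
        have := hest f hfF
        have h2 : 2 * ‖c - f‖ < 2 * (ε / 4) := by linarith
        linarith
    _ = ε := by ring
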